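/- Let q be an odd prime, α ≥ 1, and n = 2·q^α. For every CD congruence set A = {a_d mod d : d | n, d > 1} whose moduli are exactly the divisors of n greater than 1, the number of residue classes modulo n covered by A equals q^α + 2·(q^α − 1)/(q − 1), which is strictly less than n; in particular A is not a covering system. -/
import Mathlib

open Finset

private lemma count_mod' {n m b : ℕ} (hb : b < m) (hmn : m ∣ n) :
    ((Finset.range n).filter (fun r => r % m = b)).card = n / m := by
  obtain ⟨k, rfl⟩ := hmn
  have hm : 0 < m := by omega
  have key : ((Finset.range (m * k)).filter (fun r => r % m = b)).card
      = (Finset.range k).card := by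
    apply Finset.card_bij' (fun r _ => r / m) (fun i _ => b + m * i)
    · intro r hr
      simp only [Finset.mem_filter, Finset.mem_range] at hr
      exact Finset.mem_range.mpr
        ((Nat.div_lt_iff_lt_mul hm).mpr (lt_of_lt_of_eq hr.1 (mul_comm m k)))
    · intro i hi
      simp only [Finset.mem_range] at hi
      have h1 : m * (i + 1) ≤ m * k := Nat.mul_le_mul_left m (by omega)
      rw [Nat.mul_add, Nat.mul_one] at h1
      simp only [Finset.mem_filter, Finset.mem_range]
      constructor
      · omega
      · rw [Nat.add_mul_mod_self_left, Nat.mod_eq_of_lt hb]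
    · intro r hr
      simp only [Finset.mem_filter, Finset.mem_range] at hr
      have := Nat.mod_add_div r m
      omega
    · intro i _
      rw [Nat.add_mul_div_left _ _ hm, Nat.div_eq_of_lt hb, Nat.zero_add]
  rw [key, Finset.card_range, Nat.mul_div_cancel_left _ hm]

private lemma zmod_iff_mod' {d : ℕ} (hd : 0 < d) (b : ℤ) (r : ℕ) :
    ((r : ℤ) ≡ b [ZMOD (d : ℤ)]) ↔ r % d = (b % (d : ℤ)).toNat := by
  have hd' : (d : ℤ) ≠ 0 := by exact_mod_cast hd.ne'
  have h0 : (0:ℤ) ≤ b % (d:ℤ) := Int.emod_nonneg b hd'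
  have h1 : b % (d:ℤ) < d := Int.emod_lt_of_pos b (by exact_mod_cast hd)
  rw [Int.ModEq, show ((r:ℤ) % (d:ℤ)) = ((r % d : ℕ) : ℤ) from (Int.natCast_mod r d).symm]
  omega

private lemma geom_div' (q : ℕ) (hq : 2 ≤ q) (α : ℕ) :
    (q ^ α - 1) / (q - 1) = ∑ i ∈ Finset.range α, q ^ i := by
  have h : (q - 1) * ∑ i ∈ Finset.range α, q ^ i = q ^ α - 1 := by
    induction α with
    | zero => simp
    | succ m ih =>
      rw [Finset.sum_range_succ, Nat.mul_add, ih]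
      have h1 : 1 ≤ q ^ m := Nat.one_le_pow _ _ (by omega)
      have hA : q ^ (m+1) = q * q ^ m := by rw [pow_succ, mul_comm]
      have hB : (q - 1) * q ^ m = q * q ^ m - q ^ m := by
        rw [tsub_mul, one_mul]
      have h3 : q ^ m ≤ q * q ^ m := Nat.le_mul_of_pos_left _ (by omega)
      omega
  rw [← h, Nat.mul_div_cancel_left _ (by omega : 0 < q - 1)]

private lemma twice_geom_lt' (q : ℕ) (hq : 3 ≤ q) :
    ∀ α : ℕ, 1 ≤ α → 2 * (∑ i ∈ Finset.range α, q ^ i) < q ^ α := by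
  intro α
  induction α with
  | zero => intro h; omega
  | succ m ih =>
    intro _
    rcases Nat.eq_zero_or_pos m with rfl | hm
    · rw [Finset.sum_range_one, pow_zero, pow_one]; omega
    · have hih := ih hm
      rw [Finset.sum_range_succ, Nat.mul_add, pow_succ]
      have h1 : q ^ m * 3 ≤ q ^ m * q := Nat.mul_le_mul_left _ hq
      omega

/-- Let `q` be an odd prime, `α ≥ 1`, `n = 2 * q^α`. For every CD congruence set
`{a d mod d : d ∣ n, d > 1}` whose moduli are the divisors of `n` greater than `1`,
the number of residue classes mod `n` covered equals `q^α + 2*(q^α - 1)/(q - 1)`,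
which is strictly less than `n`; in particular `A` is not a covering system. -/
theorem two_q_pow_not_covering (q : ℕ) (hq : q.Prime) (hq2 : q ≠ 2)
    (α : ℕ) (hα : 1 ≤ α) (a : ℕ → ℤ)
    (hCD : ∀ d d' : ℕ, d ∣ 2 * q ^ α → d' ∣ 2 * q ^ α → 1 < d → 1 < d' → d ≠ d' →
      (∃ x : ℤ, x ≡ a d [ZMOD (d : ℤ)] ∧ x ≡ a d' [ZMOD (d' : ℤ)]) →
      Nat.gcd d d' = 1) :
    {r : ℕ | r < 2 * q ^ α ∧
        ∃ d : ℕ, d ∣ 2 * q ^ α ∧ 1 < d ∧ (r : ℤ) ≡ a d [ZMOD (d : ℤ)]}.ncard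
      = q ^ α + 2 * ((q ^ α - 1) / (q - 1)) ∧
    q ^ α + 2 * ((q ^ α - 1) / (q - 1)) < 2 * q ^ α ∧
    ¬ ∀ x : ℤ, ∃ d : ℕ, d ∣ 2 * q ^ α ∧ 1 < d ∧ x ≡ a d [ZMOD (d : ℤ)] := by
  classical
  have hq2' := hq.two_le
  have hq3 : 3 ≤ q := by rcases Nat.lt_or_ge q 3 with h | h; · interval_cases q <;> simp_all
                         · exact h
  have hqodd : Odd q := hq.odd_of_ne_two hq2
  set n := 2 * q ^ α with hn
  have hqpos : 0 < q := by omega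
  have hqppos : ∀ j : ℕ, 0 < q ^ j := fun j => pow_pos hqpos j
  have hqp1 : ∀ j : ℕ, 1 ≤ j → 1 < q ^ j := fun j hj =>
    Nat.one_lt_pow (by omega) (by omega)
  have hqoddpow : ∀ j : ℕ, Odd (q ^ j) := fun j => hqodd.pow
  have hcop : ∀ j : ℕ, Nat.Coprime 2 (q ^ j) := fun j =>
    Nat.Coprime.pow_right j (Nat.coprime_two_left.mpr hqodd)
  -- divisibility facts
  have hdvd2 : (2 : ℕ) ∣ n := ⟨q ^ α, rfl⟩
  have hdvdq : ∀ j : ℕ, j ≤ α → q ^ j ∣ n := fun j hj =>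
    Dvd.dvd.mul_left (pow_dvd_pow q hj) 2
  have hdvd2q : ∀ j : ℕ, j ≤ α → 2 * q ^ j ∣ n := fun j hj =>
    mul_dvd_mul_left 2 (pow_dvd_pow q hj)
  -- natural residues
  set c : ℕ → ℕ := fun d => (a d % (d : ℤ)).toNat with hc_def
  have hc : ∀ d : ℕ, 0 < d → c d < d := by
    intro d hd
    have h1 : a d % (d:ℤ) < d := Int.emod_lt_of_pos _ (by exact_mod_cast hd)
    simp only [hc_def]
    omega
  have hmem : ∀ (d r : ℕ), 0 < d →
      (((r : ℕ) : ℤ) ≡ a d [ZMOD (d : ℤ)] ↔ r % d = c d) := fun d r hd =>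
    zmod_iff_mod' hd (a d) r
  -- divisor classification
  have hclass : ∀ d : ℕ, d ∣ n → 1 < d →
      d = 2 ∨ ∃ j, 1 ≤ j ∧ j ≤ α ∧ (d = q ^ j ∨ d = 2 * q ^ j) := by
    intro d hd hd1
    rcases Nat.even_or_odd d with he | ho
    · have h2d : 2 ∣ d := he.two_dvd
      obtain ⟨e, rfl⟩ : ∃ e, d = 2 * e := ⟨d / 2, by omega⟩
      have he2 : e ∣ q ^ α := (Nat.mul_dvd_mul_iff_left (by norm_num : (0:ℕ) < 2)).mp hd
      obtain ⟨k, hk, rfl⟩ := (Nat.dvd_prime_pow hq).mp he2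
      rcases Nat.eq_zero_or_pos k with rfl | hk1
      · left; simp
      · right; exact ⟨k, hk1, hk, Or.inr rfl⟩
    · have hco : Nat.Coprime d 2 := Nat.coprime_two_right.mpr ho
      have hdq : d ∣ q ^ α := hco.dvd_of_dvd_mul_left hd
      obtain ⟨k, hk, rfl⟩ := (Nat.dvd_prime_pow hq).mp hdq
      have hk1 : 1 ≤ k := by
        by_contra h
        have : k = 0 := by omega
        subst this; simp at hd1
      right; exact ⟨k, hk1, hk, Or.inl rfl⟩
  -- gcd helper
  have hgcdne : ∀ (p d d' : ℕ), 2 ≤ p → p ∣ d → p ∣ d' → Nat.gcd d d' ≠ 1 := by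
    intro p d d' hp h1 h2 hg
    have := Nat.dvd_gcd h1 h2
    rw [hg] at this
    have := Nat.le_of_dvd one_pos this
    omega
  -- disjointness helper
  have hdisj : ∀ d d' : ℕ, d ∣ n → d' ∣ n → 1 < d → 1 < d' → d ≠ d' →
      Nat.gcd d d' ≠ 1 → ∀ r : ℕ, r % d = c d → r % d' = c d' → False := by
    intro d d' hd hd' h1 h1' hne hg r hr hr'
    exact hg (hCD d d' hd hd' h1 h1' hne
      ⟨(r : ℤ), (hmem d r (by omega)).mpr hr, (hmem d' r (by omega)).mpr hr'⟩)
  -- the finsets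
  set C' : Finset ℕ := (Finset.range n).filter (fun r => r % 2 = c 2) with hC'
  set A' : ℕ → Finset ℕ :=
    fun j => (Finset.range n).filter (fun r => r % (q ^ j) = c (q ^ j) ∧ r % 2 ≠ c 2) with hA'
  set B' : ℕ → Finset ℕ :=
    fun j => (Finset.range n).filter (fun r => r % (2 * q ^ j) = c (2 * q ^ j)) with hB'
  set S' : Finset ℕ := (Finset.range n).filter
    (fun r => ∃ d : ℕ, d ∣ n ∧ 1 < d ∧ (r : ℤ) ≡ a d [ZMOD (d : ℤ)]) with hS'def
  -- set equals ↑S'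
  have hset : {r : ℕ | r < n ∧
      ∃ d : ℕ, d ∣ n ∧ 1 < d ∧ (r : ℤ) ≡ a d [ZMOD (d : ℤ)]} = ↑S' := by
    ext r
    simp only [hS'def, Finset.coe_filter, Finset.mem_range, Set.mem_setOf_eq]
  -- decomposition
  have hdecomp : S' = C' ∪ (Finset.Icc 1 α).biUnion (fun j => A' j ∪ B' j) := by
    ext r
    simp only [hS'def, hC', hA', hB', Finset.mem_union, Finset.mem_biUnion,
      Finset.mem_filter, Finset.mem_range, Finset.mem_Icc]
    constructor
    · rintro ⟨hr, d, hd, hd1, hmod⟩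
      rcases hclass d hd hd1 with rfl | ⟨j, hj1, hjα, rfl | rfl⟩
      · exact Or.inl ⟨hr, (hmem 2 r two_pos).mp hmod⟩
      · by_cases hpar : r % 2 = c 2
        · exact Or.inl ⟨hr, hpar⟩
        · exact Or.inr ⟨j, ⟨hj1, hjα⟩,
            Or.inl ⟨hr, (hmem _ r (hqppos j)).mp hmod, hpar⟩⟩
      · exact Or.inr ⟨j, ⟨hj1, hjα⟩,
          Or.inr ⟨hr, (hmem _ r (by have := hqppos j; omega)).mp hmod⟩⟩
    · rintro (⟨hr, h2⟩ | ⟨j, ⟨hj1, hjα⟩, (⟨hr, hA, _⟩ | ⟨hr, hB⟩)⟩)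
      · exact ⟨hr, 2, hdvd2, one_lt_two, (hmem 2 r two_pos).mpr h2⟩
      · exact ⟨hr, q ^ j, hdvdq j hjα, hqp1 j hj1,
          (hmem _ r (hqppos j)).mpr hA⟩
      · exact ⟨hr, 2 * q ^ j, hdvd2q j hjα,
          by have := hqppos j; omega, (hmem _ r (by have := hqppos j; omega)).mpr hB⟩
  -- pairwise disjointness facts
  have hne_qq : ∀ x y : ℕ, x ≠ y → q ^ x ≠ q ^ y := fun x y hxy h =>
    hxy (Nat.pow_right_injective hq2' h)
  have hne_q2q : ∀ x y : ℕ, q ^ x ≠ 2 * q ^ y := by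
    intro x y h
    have h1 := hqoddpow x
    rw [h] at h1
    exact (by simp : ¬ Odd (2 * q ^ y)) h1
  have hq_dvd : ∀ x : ℕ, 1 ≤ x → q ∣ q ^ x := fun x hx =>
    dvd_pow_self q (by omega)
  have hq_dvd2 : ∀ x : ℕ, 1 ≤ x → q ∣ 2 * q ^ x := fun x hx =>
    Dvd.dvd.mul_left (hq_dvd x hx) 2
  have hdisjAB : ∀ j : ℕ, 1 ≤ j → j ≤ α → Disjoint (A' j) (B' j) := by
    intro j hj1 hjα
    rw [Finset.disjoint_left]
    intro r hrA hrB
    simp only [hA', hB', Finset.mem_filter] at hrA hrB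
    exact hdisj (q ^ j) (2 * q ^ j) (hdvdq j hjα) (hdvd2q j hjα)
      (hqp1 j hj1) (by have := hqppos j; omega) (hne_q2q j j)
      (hgcdne q _ _ hq2' (hq_dvd j hj1) (hq_dvd2 j hj1)) r hrA.2.1 hrB.2
  have hdisjU : ∀ x ∈ Finset.Icc 1 α, ∀ y ∈ Finset.Icc 1 α, x ≠ y →
      Disjoint (A' x ∪ B' x) (A' y ∪ B' y) := by
    intro x hx y hy hxy
    simp only [Finset.mem_Icc] at hx hy
    rw [Finset.disjoint_left]
    intro r hr1 hr2
    simp only [hA', hB', Finset.mem_union, Finset.mem_filter] at hr1 hr2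
    have hgq : ∀ u v : ℕ, q ∣ u → q ∣ v → Nat.gcd u v ≠ 1 :=
      fun u v h1 h2 => hgcdne q u v hq2' h1 h2
    rcases hr1 with ⟨_, h1, _⟩ | ⟨_, h1⟩ <;> rcases hr2 with ⟨_, h2, _⟩ | ⟨_, h2⟩
    · exact hdisj _ _ (hdvdq x hx.2) (hdvdq y hy.2) (hqp1 x hx.1) (hqp1 y hy.1)
        (hne_qq x y hxy) (hgq _ _ (hq_dvd x hx.1) (hq_dvd y hy.1)) r h1 h2
    · exact hdisj _ _ (hdvdq x hx.2) (hdvd2q y hy.2) (hqp1 x hx.1)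
        (by have := hqppos y; omega) (hne_q2q x y)
        (hgq _ _ (hq_dvd x hx.1) (hq_dvd2 y hy.1)) r h1 h2
    · exact hdisj _ _ (hdvd2q x hx.2) (hdvdq y hy.2)
        (by have := hqppos x; omega) (hqp1 y hy.1) (Ne.symm (hne_q2q y x))
        (hgq _ _ (hq_dvd2 x hx.1) (hq_dvd y hy.1)) r h1 h2
    · exact hdisj _ _ (hdvd2q x hx.2) (hdvd2q y hy.2)
        (by have := hqppos x; omega) (by have := hqppos y; omega)
        (by intro h; exact hne_qq x y hxy (by omega))
        (hgq _ _ (hq_dvd2 x hx.1) (hq_dvd2 y hy.1)) r h1 h2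
  have hdisjC : Disjoint C' ((Finset.Icc 1 α).biUnion (fun j => A' j ∪ B' j)) := by
    rw [Finset.disjoint_left]
    intro r hrC hrU
    simp only [hC', Finset.mem_filter] at hrC
    simp only [Finset.mem_biUnion, Finset.mem_union, Finset.mem_Icc] at hrU
    obtain ⟨j, ⟨hj1, hjα⟩, hj⟩ := hrU
    rcases hj with hjA | hjB
    · simp only [hA', Finset.mem_filter] at hjA
      exact hjA.2.2 hrC.2
    · simp only [hB', Finset.mem_filter] at hjB
      exact hdisj 2 (2 * q ^ j) hdvd2 (hdvd2q j hjα) one_lt_two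
        (by have := hqppos j; omega)
        (by have := hqp1 j hj1; omega)
        (hgcdne 2 _ _ le_rfl dvd_rfl ⟨q ^ j, rfl⟩) r hrC.2 hjB.2
  -- cardinalities
  have hcardC : C'.card = q ^ α := by
    rw [hC', count_mod' (hc 2 two_pos) hdvd2, hn, Nat.mul_div_cancel_left _ two_pos]
  have hnval : ∀ j : ℕ, j ≤ α → n = 2 * q ^ j * q ^ (α - j) := by
    intro j hj
    rw [hn, mul_assoc, ← pow_add, Nat.add_sub_cancel' hj]
  have hcardB : ∀ j : ℕ, 1 ≤ j → j ≤ α → (B' j).card = q ^ (α - j) := by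
    intro j hj1 hjα
    rw [hB', count_mod' (hc _ (by have := hqppos j; omega)) (hdvd2q j hjα),
      hnval j hjα, Nat.mul_div_cancel_left _ (by have := hqppos j; omega)]
  have hcardA : ∀ j : ℕ, 1 ≤ j → j ≤ α → (A' j).card = q ^ (α - j) := by
    intro j hj1 hjα
    have hc2 : c 2 < 2 := hc 2 two_pos
    have hcq : c (q ^ j) < q ^ j := hc _ (hqppos j)
    obtain ⟨t, ht2, htq⟩ := Nat.chineseRemainder (hcop j) (1 - c 2) (c (q ^ j))
    have hpos : 0 < 2 * q ^ j := by have := hqppos j; omega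
    have hfeq : A' j = (Finset.range n).filter
        (fun r => r % (2 * q ^ j) = t % (2 * q ^ j)) := by
      ext r
      simp only [hA', Finset.mem_filter, Finset.mem_range]
      constructor
      · rintro ⟨hr, hq1, hq2par⟩
        refine ⟨hr, ?_⟩
        have h2 : r ≡ t [MOD 2] := by
          have ht2' : t % 2 = (1 - c 2) % 2 := ht2
          show r % 2 = t % 2
          omega
        have hqj : r ≡ t [MOD q ^ j] := by
          have htq' : t % q ^ j = c (q ^ j) % q ^ j := htq
          show r % (q ^ j) = t % (q ^ j)
          rw [hq1, htq', Nat.mod_eq_of_lt hcq]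
        exact (Nat.modEq_and_modEq_iff_modEq_mul (hcop j)).mp ⟨h2, hqj⟩
      · rintro ⟨hr, hmod⟩
        have h := (Nat.modEq_and_modEq_iff_modEq_mul (hcop j)).mpr
          (show r ≡ t [MOD 2 * q ^ j] from hmod)
        have h2 : r % 2 = t % 2 := h.1
        have hqj : r % (q ^ j) = t % (q ^ j) := h.2
        have ht2' : t % 2 = (1 - c 2) % 2 := ht2
        have htq' : t % q ^ j = c (q ^ j) % q ^ j := htq
        have hcqm : c (q ^ j) % q ^ j = c (q ^ j) := Nat.mod_eq_of_lt hcq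
        refine ⟨hr, by rw [hqj, htq', hcqm], by omega⟩
    rw [hfeq, count_mod' (Nat.mod_lt t hpos) (hdvd2q j hjα),
      hnval j hjα, Nat.mul_div_cancel_left _ hpos]
  -- total count
  have hsum : S'.card = q ^ α + 2 * ∑ i ∈ Finset.range α, q ^ i := by
    rw [hdecomp, Finset.card_union_of_disjoint hdisjC, hcardC,
      Finset.card_biUnion hdisjU]
    congr 1
    have hstep : ∀ j ∈ Finset.Icc 1 α, (A' j ∪ B' j).card = q ^ (α - j) + q ^ (α - j) := by
      intro j hj
      simp only [Finset.mem_Icc] at hj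
      rw [Finset.card_union_of_disjoint (hdisjAB j hj.1 hj.2),
        hcardA j hj.1 hj.2, hcardB j hj.1 hj.2]
    rw [Finset.sum_congr rfl hstep]
    have h1 : ∑ j ∈ Finset.Icc 1 α, (q ^ (α - j) + q ^ (α - j))
        = 2 * ∑ j ∈ Finset.Icc 1 α, q ^ (α - j) := by
      rw [Finset.mul_sum]; exact Finset.sum_congr rfl (fun j _ => by ring)
    rw [h1]
    congr 1
    rw [show Finset.Icc 1 α = Finset.Ico 1 (α + 1) by rfl,
      Finset.sum_Ico_eq_sum_range]
    simp only [Nat.add_sub_cancel]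
    calc ∑ i ∈ Finset.range α, q ^ (α - (1 + i))
        = ∑ i ∈ Finset.range α, q ^ (α - 1 - i) := by
          exact Finset.sum_congr rfl (fun i _ => by congr 1; omega)
      _ = ∑ i ∈ Finset.range α, q ^ i := Finset.sum_range_reflect (fun i => q ^ i) α
  have hgeom := geom_div' q (by omega) α
  have hlt := twice_geom_lt' q hq3 α hα
  have hcard : {r : ℕ | r < n ∧
      ∃ d : ℕ, d ∣ n ∧ 1 < d ∧ (r : ℤ) ≡ a d [ZMOD (d : ℤ)]}.ncard
      = q ^ α + 2 * ((q ^ α - 1) / (q - 1)) := by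
    rw [hset, Set.ncard_coe_finset, hsum, hgeom]
  refine ⟨hcard, by rw [hgeom]; omega, ?_⟩
  intro hcov
  have hIio : {r : ℕ | r < n ∧
      ∃ d : ℕ, d ∣ n ∧ 1 < d ∧ (r : ℤ) ≡ a d [ZMOD (d : ℤ)]} = Set.Iio n := by
    ext r
    simp only [Set.mem_setOf_eq, Set.mem_Iio]
    exact ⟨fun h => h.1, fun h => ⟨h, hcov (r : ℤ)⟩⟩
  have hn' : (Set.Iio n).ncard = n := by
    rw [← Finset.coe_range, Set.ncard_coe_finset, Finset.card_range]
  rw [hIio, hn', hgeom] at hcard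
  omega
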